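/- If G is a triangle-free simple graph with n vertices and m edges, then G has at least m − n/2 good non-edges, where a non-edge {u,v} (u ≠ v, uv ∉ E(G)) is good if N(u) ∩ N(v) ≠ ∅. -/

import Mathlib

open Finset

lemma tf_no_tri {V : Type} [DecidableEq V] {G : SimpleGraph V} (htf : G.CliqueFree 3) {a b c : V}
    (hab : G.Adj a b) (hac : G.Adj a c) (hbc : G.Adj b c) : False :=
  htf {a, b, c} (SimpleGraph.is3Clique_triple_iff.mpr ⟨hab, hac, hbc⟩)

lemma pair_eq_cases {α : Type} [DecidableEq α] {a b c d : α}
    (h : ({a, b} : Finset α) = {c, d}) : (a = c ∧ b = d) ∨ (a = d ∧ b = c) := by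
  have ha : a = c ∨ a = d := by
    have : a ∈ ({c, d} : Finset α) := h ▸ (by simp)
    simpa using this
  have hb : b = c ∨ b = d := by
    have : b ∈ ({c, d} : Finset α) := h ▸ (by simp)
    simpa using this
  have hc : c = a ∨ c = b := by
    have : c ∈ ({a, b} : Finset α) := by rw [h]; simp
    simpa using this
  have hd : d = a ∨ d = b := by
    have : d ∈ ({a, b} : Finset α) := by rw [h]; simp
    simpa using this
  rcases ha with rfl | rfl <;> rcases hb with rfl | rfl <;> tauto

lemma exists_maximal_matching {V : Type} [Fintype V] [DecidableEq V]
    (G : SimpleGraph V) [DecidableRel G.Adj] :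
    ∃ f : V → V, (∀ v, f (f v) = v) ∧ (∀ v, f v ≠ v → G.Adj v (f v)) ∧
      (∀ x y, G.Adj x y → f x ≠ x ∨ f y ≠ y) := by
  suffices h : ∀ S : Finset V, ∃ f : V → V, (∀ v, f (f v) = v) ∧
      (∀ v, f v ≠ v → G.Adj v (f v) ∧ v ∈ S ∧ f v ∈ S) ∧
      (∀ x ∈ S, ∀ y ∈ S, G.Adj x y → f x ≠ x ∨ f y ≠ y) by
    obtain ⟨f, h1, h2, h3⟩ := h Finset.univ
    exact ⟨f, h1, fun v hv => (h2 v hv).1, fun x y h => h3 x (mem_univ x) y (mem_univ y) h⟩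
  intro S
  induction S using Finset.strongInduction with
  | H S ih =>
    by_cases h : ∃ x ∈ S, ∃ y ∈ S, G.Adj x y
    · obtain ⟨x, hx, y, hy, hxy⟩ := h
      have hne : x ≠ y := G.ne_of_adj hxy
      have hsub : ({x, y} : Finset V) ⊆ S := by
        intro z hz; simp at hz; rcases hz with rfl | rfl <;> assumption
      obtain ⟨g, h1, h2, h3⟩ := ih (S \ {x, y}) (Finset.sdiff_ssubset hsub (by simp))
      have hgx : g x = x := by
        by_contra hgx
        have := (h2 x hgx).2.1
        simp at this
      have hgy : g y = y := by
        by_contra hgy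
        have := (h2 y hgy).2.1
        simp at this
      refine ⟨fun v => if v = x then y else if v = y then x else g v, ?_, ?_, ?_⟩
      · intro v
        by_cases hvx : v = x
        · subst hvx; simp [hne, hne.symm]
        · by_cases hvy : v = y
          · subst hvy; simp [hne, hne.symm]
          · simp only [if_neg hvx, if_neg hvy]
            by_cases hgv : g v = v
            · rw [hgv, if_neg hvx, if_neg hvy, hgv]
            · have hmem := (h2 v hgv).2.2
              have h1' : g v ≠ x := by intro hh; rw [hh] at hmem; simp at hmem
              have h2' : g v ≠ y := by intro hh; rw [hh] at hmem; simp at hmem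
              rw [if_neg h1', if_neg h2', h1 v]
      · intro v hv
        by_cases hvx : v = x
        · subst hvx
          simp only [if_pos rfl]
          exact ⟨hxy, hx, hy⟩
        · by_cases hvy : v = y
          · subst hvy
            simp only [if_neg hvx, if_pos rfl]
            exact ⟨hxy.symm, hy, hx⟩
          · simp only [if_neg hvx, if_neg hvy] at hv ⊢
            by_cases hgv : g v = v
            · exact absurd hgv hv
            · obtain ⟨ha, hb, hc⟩ := h2 v hgv
              have h1' : g v ≠ x := by intro hh; rw [hh] at hc; simp at hc
              have h2' : g v ≠ y := by intro hh; rw [hh] at hc; simp at hc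
              simp only [mem_sdiff] at hb hc
              exact ⟨ha, hb.1, hc.1⟩
      · intro a ha b hb hab
        by_cases hax : a = x
        · subst hax; left; simp [hne, hne.symm]
        · by_cases hay : a = y
          · subst hay; left; simp [hax, hne, hne.symm]
          · by_cases hbx : b = x
            · subst hbx; right; simp [hne, hne.symm]
            · by_cases hby : b = y
              · subst hby; right; simp [hbx, hne, hne.symm]
              · have ha' : a ∈ S \ {x, y} := by simp [ha, hax, hay]
                have hb' : b ∈ S \ {x, y} := by simp [hb, hbx, hby]
                rcases h3 a ha' b hb' hab with h | h
                · left; simpa [hax, hay] using h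
                · right; simpa [hbx, hby] using h
    · refine ⟨id, fun v => rfl, fun v hv => absurd rfl hv, fun a ha b hb hab => absurd ⟨a, ha, b, hb, hab⟩ h⟩

/-- Lemma: if `G` is a triangle-free graph with `n` vertices and `m` edges, then `G` has at
least `m - n/2` good non-edges, where a non-edge `{u, v}` is good if `u` and `v` have a
common neighbor. -/
theorem triangle_free_good_nonedges
    {V : Type} [Fintype V] [DecidableEq V]
    (G : SimpleGraph V) [DecidableRel G.Adj]
    (htf : G.CliqueFree 3) :
    (G.edgeFinset.card : ℝ) - (Fintype.card V : ℝ) / 2 ≤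
      ((Finset.univ.filter (fun p : Finset V =>
        p.card = 2 ∧ (∀ u ∈ p, ∀ v ∈ p, ¬ G.Adj u v) ∧ ∃ w : V, ∀ u ∈ p, G.Adj u w)).card : ℝ) := by
  set GP := (Finset.univ.filter (fun p : Finset V =>
        p.card = 2 ∧ (∀ u ∈ p, ∀ v ∈ p, ¬ G.Adj u v) ∧ ∃ w : V, ∀ u ∈ p, G.Adj u w)) with hGP
  suffices key : 2 * G.edgeFinset.card ≤ Fintype.card V + 2 * GP.card by
    have h := (Nat.cast_le (α := ℝ)).mpr key
    push_cast at h
    linarith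
  letI : LinearOrder V := LinearOrder.lift' (Fintype.equivFin V) (Fintype.equivFin V).injective
  obtain ⟨f, hinv, hadjf, hmaxf⟩ := exists_maximal_matching G
  have hGPmem : ∀ a b w : V, a ≠ b → G.Adj a w → G.Adj b w → ({a, b} : Finset V) ∈ GP := by
    intro a b w hne haw hbw
    rw [hGP, mem_filter]
    refine ⟨mem_univ _, Finset.card_pair hne, ?_, ⟨w, ?_⟩⟩
    · intro u hu v hv
      simp only [mem_insert, mem_singleton] at hu hv
      rcases hu with rfl | rfl <;> rcases hv with rfl | rfl
      · exact G.loopless.irrefl _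
      · exact fun h => tf_no_tri htf h haw hbw
      · exact fun h => tf_no_tri htf h hbw haw
      · exact G.loopless.irrefl _
    · intro u hu
      simp only [mem_insert, mem_singleton] at hu
      rcases hu with rfl | rfl
      · exact haw
      · exact hbw
  set E' : Finset (V × V) := univ.filter (fun p : V × V => p.1 < p.2 ∧ G.Adj p.1 p.2) with hE'
  have hEcard : G.edgeFinset.card = E'.card := by
    refine (Finset.card_bij (s := E') (t := G.edgeFinset) (fun p _ => Sym2.mk p.1 p.2) ?_ ?_ ?_).symm
    · intro p hp
      rw [hE', mem_filter] at hp
      rw [SimpleGraph.mem_edgeFinset]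
      exact hp.2.2
    · intro p hp q hq heq
      rw [hE', mem_filter] at hp hq
      rcases Sym2.eq_iff.1 heq with ⟨h1, h2⟩ | ⟨h1, h2⟩
      · exact Prod.ext h1 h2
      · exfalso
        have h3 : p.1 < p.2 := hp.2.1
        rw [h1, h2] at h3
        exact lt_irrefl _ (h3.trans hq.2.1)
    · intro e he
      induction e using Sym2.ind with
      | _ x y =>
        have hadj : G.Adj x y := by
          rwa [SimpleGraph.mem_edgeFinset, SimpleGraph.mem_edgeSet] at he
        rcases lt_or_gt_of_ne (G.ne_of_adj hadj) with h | h
        · exact ⟨(x, y), by rw [hE', mem_filter]; exact ⟨mem_univ _, h, hadj⟩, rfl⟩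
        · exact ⟨(y, x), by rw [hE', mem_filter]; exact ⟨mem_univ _, h, hadj.symm⟩, Sym2.eq_swap⟩
  set EM := E'.filter (fun p => f p.1 = p.2) with hEM
  set NM := E' \ EM with hNM
  have hNMfacts : ∀ p ∈ NM, p.1 < p.2 ∧ G.Adj p.1 p.2 ∧ f p.1 ≠ p.2 ∧ f p.2 ≠ p.1 := by
    intro p hp
    rw [hNM, mem_sdiff] at hp
    obtain ⟨hp1, hp2⟩ := hp
    have h1 : p.1 < p.2 ∧ G.Adj p.1 p.2 := by
      have h := hp1; rw [hE', mem_filter] at h; exact h.2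
    have hfp : f p.1 ≠ p.2 := fun hh => hp2 (by rw [hEM, mem_filter]; exact ⟨hp1, hh⟩)
    exact ⟨h1.1, h1.2, hfp, fun hh => hfp (by rw [← hh, hinv])⟩
  set S1 := NM.filter (fun p => f p.1 = p.1 ∨ f p.2 = p.2) with hS1
  set S2 := NM.filter (fun p => ¬(f p.1 = p.1 ∨ f p.2 = p.2)) with hS2
  have hS1facts : ∀ p ∈ S1, (f p.1 = p.1 ∧ f p.2 ≠ p.2) ∨ (f p.1 ≠ p.1 ∧ f p.2 = p.2) := by
    intro p hp
    rw [hS1, mem_filter] at hp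
    have hadj := (hNMfacts p hp.1).2.1
    rcases hmaxf p.1 p.2 hadj with h | h
    · rcases hp.2 with h' | h'
      · exact absurd h' h
      · exact Or.inr ⟨h, h'⟩
    · rcases hp.2 with h' | h'
      · exact Or.inl ⟨h', h⟩
      · exact absurd h' h
  have hS2facts : ∀ p ∈ S2, f p.1 ≠ p.1 ∧ f p.2 ≠ p.2 := by
    intro p hp
    rw [hS2, mem_filter] at hp
    push_neg at hp
    exact hp.2
  set g1 : V × V → Finset V := fun p => if f p.1 = p.1 then {f p.2, p.1} else {f p.1, p.2} with hg1
  set g2 : (V × V) × Bool → Finset V :=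
    fun q => if q.2 then {f q.1.2, q.1.1} else {f q.1.1, q.1.2} with hg2
  set T1 := S1.image g1 with hT1
  set T2 := ((S2 ×ˢ (univ : Finset Bool)).image g2) with hT2
  have hT1sub : T1 ⊆ GP := by
    intro P hP
    rw [hT1, mem_image] at hP
    obtain ⟨e, he, rfl⟩ := hP
    have hem : e ∈ NM := by have h := he; rw [hS1, mem_filter] at h; exact h.1
    obtain ⟨hlt, hadj, hf1, hf2⟩ := hNMfacts e hem
    rcases hS1facts e he with ⟨hx, hy⟩ | ⟨hx, hy⟩
    · have hgg : g1 e = {f e.2, e.1} := by rw [hg1]; simp [hx]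
      rw [hgg]
      exact hGPmem _ _ e.2 hf2 (hadjf e.2 hy).symm hadj
    · have hgg : g1 e = {f e.1, e.2} := by rw [hg1]; simp [hx]
      rw [hgg]
      exact hGPmem _ _ e.1 hf1 (hadjf e.1 hx).symm hadj.symm
  have hT2sub : T2 ⊆ GP := by
    intro P hP
    rw [hT2, mem_image] at hP
    obtain ⟨q, hq, rfl⟩ := hP
    rw [mem_product] at hq
    obtain ⟨hx, hy⟩ := hS2facts q.1 hq.1
    have hem : q.1 ∈ NM := by have h := hq.1; rw [hS2, mem_filter] at h; exact h.1
    obtain ⟨hlt, hadj, hf1, hf2⟩ := hNMfacts q.1 hem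
    rcases (Bool.eq_false_or_eq_true q.2).symm with hb | hb
    · have hgg : g2 q = {f q.1.1, q.1.2} := by rw [hg2]; simp [hb]
      rw [hgg]
      exact hGPmem _ _ q.1.1 hf1 (hadjf q.1.1 hx).symm hadj.symm
    · have hgg : g2 q = {f q.1.2, q.1.1} := by rw [hg2]; simp [hb]
      rw [hgg]
      exact hGPmem _ _ q.1.2 hf2 (hadjf q.1.2 hy).symm hadj
  have hT1unm : ∀ P ∈ T1, ∃ u ∈ P, f u = u := by
    intro P hP
    rw [hT1, mem_image] at hP
    obtain ⟨e, he, rfl⟩ := hP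
    rcases hS1facts e he with ⟨hx, hy⟩ | ⟨hx, hy⟩
    · exact ⟨e.1, by rw [hg1]; simp [hx], hx⟩
    · exact ⟨e.2, by rw [hg1]; simp [hx], hy⟩
  have hT2m : ∀ P ∈ T2, ∀ u ∈ P, f u ≠ u := by
    intro P hP u hu
    rw [hT2, mem_image] at hP
    obtain ⟨q, hq, rfl⟩ := hP
    rw [mem_product] at hq
    obtain ⟨hx, hy⟩ := hS2facts q.1 hq.1
    have hmx : f (f q.1.1) ≠ f q.1.1 := by rw [hinv]; exact fun h => hx h.symm
    have hmy : f (f q.1.2) ≠ f q.1.2 := by rw [hinv]; exact fun h => hy h.symm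
    rw [hg2] at hu
    rcases (Bool.eq_false_or_eq_true q.2).symm with hb | hb
    · simp only [hb, if_false, Bool.false_eq_true, mem_insert, mem_singleton] at hu
      rcases hu with rfl | rfl
      · exact hmx
      · exact hy
    · simp only [hb, if_true, mem_insert, mem_singleton] at hu
      rcases hu with rfl | rfl
      · exact hmy
      · exact hx
  have hdisj : Disjoint T1 T2 := by
    rw [Finset.disjoint_left]
    intro P hP1 hP2
    obtain ⟨u, hu, hfu⟩ := hT1unm P hP1
    exact hT2m P hP2 u hu hfu
  have hS1card : S1.card = T1.card := by
    rw [hT1]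
    refine (Finset.card_image_of_injOn ?_).symm
    intro e he' e' he'' heq
    have heS : e ∈ S1 := mem_coe.1 he'
    have heS' : e' ∈ S1 := mem_coe.1 he''
    have hm : e ∈ NM := by have h := heS; rw [hS1, mem_filter] at h; exact h.1
    have hm' : e' ∈ NM := by have h := heS'; rw [hS1, mem_filter] at h; exact h.1
    obtain ⟨hlt, hadj, hf1, hf2⟩ := hNMfacts e hm
    obtain ⟨hlt', hadj', hf1', hf2'⟩ := hNMfacts e' hm'
    rcases hS1facts e heS with ⟨hx, hy⟩ | ⟨hx, hy⟩ <;>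
      rcases hS1facts e' heS' with ⟨hx', hy'⟩ | ⟨hx', hy'⟩
    · have hq : ({f e.2, e.1} : Finset V) = {f e'.2, e'.1} := by
        rw [hg1] at heq; simpa [hx, hx'] using heq
      rcases pair_eq_cases hq with ⟨ha, hb⟩ | ⟨ha, hb⟩
      · have h3 : e.2 = e'.2 := by rw [← hinv e.2, ha, hinv]
        exact Prod.ext hb h3
      · exfalso
        have h3 : e.2 = e'.1 := by rw [← hinv e.2, ha]; exact hx'
        exact hy (ha.trans h3.symm)
    · have hq : ({f e.2, e.1} : Finset V) = {f e'.1, e'.2} := by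
        rw [hg1] at heq; simpa [hx, hx'] using heq
      exfalso
      rcases pair_eq_cases hq with ⟨ha, hb⟩ | ⟨ha, hb⟩
      · have h3 : e.2 = e'.1 := by rw [← hinv e.2, ha, hinv]
        have hcon : e.1 < e.1 := by
          calc e.1 < e.2 := hlt
          _ = e'.1 := h3
          _ < e'.2 := hlt'
          _ = e.1 := hb.symm
        exact lt_irrefl _ hcon
      · have h3 : e.2 = e'.2 := by rw [← hinv e.2, ha]; exact hy'
        exact hy (ha.trans h3.symm)
    · have hq : ({f e.1, e.2} : Finset V) = {f e'.2, e'.1} := by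
        rw [hg1] at heq; simpa [hx, hx'] using heq
      exfalso
      rcases pair_eq_cases hq with ⟨ha, hb⟩ | ⟨ha, hb⟩
      · have h3 : e.1 = e'.2 := by rw [← hinv e.1, ha, hinv]
        have hcon : e.1 < e.1 := by
          calc e.1 < e.2 := hlt
          _ = e'.1 := hb
          _ < e'.2 := hlt'
          _ = e.1 := h3.symm
        exact lt_irrefl _ hcon
      · have h3 : e.1 = e'.1 := by rw [← hinv e.1, ha]; exact hx'
        exact hx (ha.trans h3.symm)
    · have hq : ({f e.1, e.2} : Finset V) = {f e'.1, e'.2} := by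
        rw [hg1] at heq; simpa [hx, hx'] using heq
      rcases pair_eq_cases hq with ⟨ha, hb⟩ | ⟨ha, hb⟩
      · have h3 : e.1 = e'.1 := by rw [← hinv e.1, ha, hinv]
        exact Prod.ext h3 hb
      · exfalso
        have h3 : e.1 = e'.2 := by rw [← hinv e.1, ha]; exact hy'
        exact hx (ha.trans h3.symm)
  have hS2card : S2.card * 2 ≤ 2 * T2.card := by
    have hmain := Finset.card_le_mul_card_image (s := S2 ×ˢ (univ : Finset Bool)) (f := g2) 2 ?_
    · rwa [Finset.card_product, Finset.card_univ, Fintype.card_bool, ← hT2] at hmain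
    · intro P hP
      have hPGP : P ∈ GP := hT2sub (by rw [hT2]; exact hP)
      have hP2 : P.card = 2 := by
        have h := hPGP; rw [hGP, mem_filter] at h; exact h.2.1
      refine le_trans (Finset.card_le_card_of_injOn
        (fun q => if q.2 then q.1.1 else q.1.2) ?_ ?_) (le_of_eq hP2)
      · intro q hq
        rw [mem_coe, mem_filter] at hq
        rcases (Bool.eq_false_or_eq_true q.2).symm with hb | hb
        · rw [← hq.2, hg2]; simp [hb]
        · rw [← hq.2, hg2]; simp [hb]
      · intro q hq1 q' hq1' heq
        have hq := mem_coe.1 hq1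
        have hq' := mem_coe.1 hq1'
        rw [mem_filter] at hq hq'
        obtain ⟨hqm, hqP⟩ := hq
        obtain ⟨hq'm, hq'P⟩ := hq'
        rw [mem_product] at hqm hq'm
        obtain ⟨hx, hy⟩ := hS2facts q.1 hqm.1
        obtain ⟨hx', hy'⟩ := hS2facts q'.1 hq'm.1
        have hm : q.1 ∈ NM := by have h := hqm.1; rw [hS2, mem_filter] at h; exact h.1
        have hm' : q'.1 ∈ NM := by have h := hq'm.1; rw [hS2, mem_filter] at h; exact h.1
        obtain ⟨hlt, hadj, hf1, hf2⟩ := hNMfacts q.1 hm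
        obtain ⟨hlt', hadj', hf1', hf2'⟩ := hNMfacts q'.1 hm'
        have hgg : g2 q = g2 q' := hqP.trans hq'P.symm
        rcases (Bool.eq_false_or_eq_true q.2).symm with hb | hb <;>
          rcases (Bool.eq_false_or_eq_true q'.2).symm with hb' | hb'
        · -- false / false
          have hvv : q.1.2 = q'.1.2 := by simpa [hb, hb'] using heq
          have hpq : ({f q.1.1, q.1.2} : Finset V) = {f q'.1.1, q'.1.2} := by
            rw [hg2] at hgg; simpa [hb, hb'] using hgg
          rcases pair_eq_cases hpq with ⟨ha, hbb⟩ | ⟨ha, hbb⟩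
          · have h3 : q.1.1 = q'.1.1 := by rw [← hinv q.1.1, ha, hinv]
            exact Prod.ext (Prod.ext h3 hvv) (hb.trans hb'.symm)
          · exfalso
            exact hf1 (ha.trans hvv.symm)
        · -- false / true
          exfalso
          have hvv : q.1.2 = q'.1.1 := by simpa [hb, hb'] using heq
          have hpq : ({f q.1.1, q.1.2} : Finset V) = {f q'.1.2, q'.1.1} := by
            rw [hg2] at hgg; simpa [hb, hb'] using hgg
          rcases pair_eq_cases hpq with ⟨ha, hbb⟩ | ⟨ha, hbb⟩
          · have h3 : q.1.1 = q'.1.2 := by rw [← hinv q.1.1, ha, hinv]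
            have hcon : q.1.1 < q.1.1 := by
              calc q.1.1 < q.1.2 := hlt
              _ = q'.1.1 := hvv
              _ < q'.1.2 := hlt'
              _ = q.1.1 := h3.symm
            exact lt_irrefl _ hcon
          · exact hf1 (ha.trans hvv.symm)
        · -- true / false
          exfalso
          have hvv : q.1.1 = q'.1.2 := by simpa [hb, hb'] using heq
          have hpq : ({f q.1.2, q.1.1} : Finset V) = {f q'.1.1, q'.1.2} := by
            rw [hg2] at hgg; simpa [hb, hb'] using hgg
          rcases pair_eq_cases hpq with ⟨ha, hbb⟩ | ⟨ha, hbb⟩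
          · have h3 : q.1.2 = q'.1.1 := by rw [← hinv q.1.2, ha, hinv]
            have hcon : q.1.1 < q.1.1 := by
              calc q.1.1 < q.1.2 := hlt
              _ = q'.1.1 := h3
              _ < q'.1.2 := hlt'
              _ = q.1.1 := hvv.symm
            exact lt_irrefl _ hcon
          · exact hf2 (ha.trans hvv.symm)
        · -- true / true
          have hvv : q.1.1 = q'.1.1 := by simpa [hb, hb'] using heq
          have hpq : ({f q.1.2, q.1.1} : Finset V) = {f q'.1.2, q'.1.1} := by
            rw [hg2] at hgg; simpa [hb, hb'] using hgg
          rcases pair_eq_cases hpq with ⟨ha, hbb⟩ | ⟨ha, hbb⟩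
          · have h3 : q.1.2 = q'.1.2 := by rw [← hinv q.1.2, ha, hinv]
            exact Prod.ext (Prod.ext hvv h3) (hb.trans hb'.symm)
          · exfalso
            exact hf2 (ha.trans hvv.symm)
  have hEMcard : EM.card * 2 ≤ Fintype.card V := by
    have hfacts : ∀ p ∈ EM, p.1 < p.2 ∧ f p.1 = p.2 ∧ f p.2 = p.1 := by
      intro p hp
      rw [hEM, mem_filter] at hp
      have h := hp.1
      rw [hE', mem_filter] at h
      exact ⟨h.2.1, hp.2, by rw [← hp.2, hinv]⟩
    have h := Finset.card_le_card_of_injOn (s := EM ×ˢ (univ : Finset Bool))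
        (t := (univ : Finset V))
        (fun q => if q.2 then q.1.1 else q.1.2) (fun _ _ => mem_univ _) ?_
    · rwa [Finset.card_product, Finset.card_univ, Fintype.card_bool, Finset.card_univ] at h
    · intro q hq1 q' hq1' heq
      have hq := mem_product.1 (mem_coe.1 hq1)
      have hq' := mem_product.1 (mem_coe.1 hq1')
      obtain ⟨hlt, hfa, hfb⟩ := hfacts q.1 hq.1
      obtain ⟨hlt', hfa', hfb'⟩ := hfacts q'.1 hq'.1
      rcases (Bool.eq_false_or_eq_true q.2).symm with hb | hb <;>
        rcases (Bool.eq_false_or_eq_true q'.2).symm with hb' | hb'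
      · have hvv : q.1.2 = q'.1.2 := by simpa [hb, hb'] using heq
        have h3 : q.1.1 = q'.1.1 := by rw [← hfb, hvv, hfb']
        exact Prod.ext (Prod.ext h3 hvv) (hb.trans hb'.symm)
      · exfalso
        have hvv : q.1.2 = q'.1.1 := by simpa [hb, hb'] using heq
        have h3 : q.1.1 = q'.1.2 := by rw [← hfb, hvv, hfa']
        have hcon : q.1.1 < q.1.1 := by
          calc q.1.1 < q.1.2 := hlt
          _ = q'.1.1 := hvv
          _ < q'.1.2 := hlt'
          _ = q.1.1 := h3.symm
        exact lt_irrefl _ hcon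
      · exfalso
        have hvv : q.1.1 = q'.1.2 := by simpa [hb, hb'] using heq
        have h3 : q.1.2 = q'.1.1 := by rw [← hfa, hvv, hfb']
        have hcon : q.1.1 < q.1.1 := by
          calc q.1.1 < q.1.2 := hlt
          _ = q'.1.1 := h3
          _ < q'.1.2 := hlt'
          _ = q.1.1 := hvv.symm
        exact lt_irrefl _ hcon
      · have hvv : q.1.1 = q'.1.1 := by simpa [hb, hb'] using heq
        have h3 : q.1.2 = q'.1.2 := by rw [← hfa, hvv, hfa']
        exact Prod.ext (Prod.ext hvv h3) (hb.trans hb'.symm)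
  have hsplit : S1.card + S2.card = NM.card := by
    rw [hS1, hS2]
    exact Finset.card_filter_add_card_filter_not _
  have hENM : NM.card + EM.card = E'.card :=
    Finset.card_sdiff_add_card_eq_card (Finset.filter_subset _ _)
  have hT : T1.card + T2.card ≤ GP.card := by
    rw [← Finset.card_union_of_disjoint hdisj]
    exact Finset.card_le_card (union_subset hT1sub hT2sub)
  rw [hEcard]
  omega
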